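/- Under the stated assumptions, for any parameter ζ with R − ζ·1 and L − ζ·1 invertible, the inverse-shifted tau-function satisfies τ[ζ̄]/τ = 1 − ⟨a| F B[ζ̄] |α⟩ and also τ[ζ̄]/τ = 1 + ⟨b[ζ̄]| G A |β⟩, where ω[ζ̄] = T_ζ⁻¹ω; explicitly, det(1 + A(R−ζ) B(L−ζ)⁻¹) = det(1 + A B)·(1 − ⟨a| (1+BA)⁻¹ B(L−ζ)⁻¹ |α⟩) = det(1 + A B)·(1 + ⟨b|(L−ζ)⁻¹ (1+AB)⁻¹ A |β⟩). -/

import Mathlib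

open Matrix

noncomputable section

lemma vecMulVec_mul' {n m p : ℕ} (u : Fin n → ℂ) (v : Fin m → ℂ)
    (M : Matrix (Fin m) (Fin p) ℂ) :
    Matrix.vecMulVec u v * M = Matrix.vecMulVec u (Matrix.vecMul v M) := by
  ext i j
  simp [Matrix.mul_apply, Matrix.vecMulVec_apply, Matrix.vecMul, dotProduct,
    Finset.mul_sum, mul_assoc]

lemma mul_vecMulVec' {n m p : ℕ} (M : Matrix (Fin n) (Fin m) ℂ)
    (u : Fin m → ℂ) (v : Fin p → ℂ) :
    M * Matrix.vecMulVec u v = Matrix.vecMulVec (M *ᵥ u) v := by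
  ext i j
  simp [Matrix.mul_apply, Matrix.vecMulVec_apply, Matrix.mulVec, dotProduct,
    Finset.sum_mul, mul_assoc]

lemma det_one_add_vecMulVec' {n : ℕ} (u v : Fin n → ℂ) :
    (1 + Matrix.vecMulVec u v).det = 1 + v ⬝ᵥ u := by
  rw [Matrix.vecMulVec_eq Unit, Matrix.det_one_add_replicateCol_mul_replicateRow]

/-- for a parameter `ζ` with `R − ζ·1` and `L − ζ·1` invertible, the
inverse-shifted tau-function `τ[ζ̄] = det(1 + A(R−ζ) B(L−ζ)⁻¹)` satisfies
`τ[ζ̄] = τ·(1 − ⟨a|(1+BA)⁻¹B(L−ζ)⁻¹|α⟩)` and `τ[ζ̄] = τ·(1 + ⟨b|(L−ζ)⁻¹(1+AB)⁻¹A|β⟩)`. -/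
theorem statement1 {n : ℕ} (hn : 1 ≤ n) (l r : Fin n → ℂ)
    (hlr : ∀ j k, l j ≠ r k) (α β a b : Fin n → ℂ)
    (A B : Matrix (Fin n) (Fin n) ℂ)
    (hA : Matrix.diagonal l * A - A * Matrix.diagonal r = Matrix.vecMulVec α a)
    (hB : Matrix.diagonal r * B - B * Matrix.diagonal l = Matrix.vecMulVec β b)
    (ζ : ℂ)
    (hζR : IsUnit (Matrix.diagonal r - ζ • (1 : Matrix (Fin n) (Fin n) ℂ)))
    (hζL : IsUnit (Matrix.diagonal l - ζ • (1 : Matrix (Fin n) (Fin n) ℂ)))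
    (hinv : IsUnit (1 + A * B))
    (hinv' : IsUnit (1 + A * (Matrix.diagonal r - ζ • 1) *
        (B * (Matrix.diagonal l - ζ • 1)⁻¹))) :
    (1 + A * (Matrix.diagonal r - ζ • 1) * (B * (Matrix.diagonal l - ζ • 1)⁻¹)).det
        = (1 + A * B).det *
          (1 - Matrix.vecMul a
            ((1 + B * A)⁻¹ * (B * (Matrix.diagonal l - ζ • 1)⁻¹)) ⬝ᵥ α) ∧
    (1 + A * (Matrix.diagonal r - ζ • 1) * (B * (Matrix.diagonal l - ζ • 1)⁻¹)).det
        = (1 + A * B).det *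
          (1 + Matrix.vecMul b
            ((Matrix.diagonal l - ζ • 1)⁻¹ * (1 + A * B)⁻¹ * A) ⬝ᵥ β) := by
  set X : Matrix (Fin n) (Fin n) ℂ := Matrix.diagonal l - ζ • 1 with hXdef
  set Y : Matrix (Fin n) (Fin n) ℂ := Matrix.diagonal r - ζ • 1 with hYdef
  set C : Matrix (Fin n) (Fin n) ℂ := 1 + A * B with hCdef
  set D : Matrix (Fin n) (Fin n) ℂ := 1 + B * A with hDdef
  have hXdet : IsUnit X.det := (Matrix.isUnit_iff_isUnit_det X).mp hζL
  have hCdet : IsUnit C.det := (Matrix.isUnit_iff_isUnit_det C).mp hinv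
  have hDdet : IsUnit D.det := by
    have : C.det = D.det := by
      rw [hCdef, hDdef, Matrix.det_one_add_mul_comm]
    rwa [this] at hCdet
  have hX1 : X * X⁻¹ = 1 := Matrix.mul_nonsing_inv X hXdet
  have hX2 : X⁻¹ * X = 1 := Matrix.nonsing_inv_mul X hXdet
  have hC1 : C * C⁻¹ = 1 := Matrix.mul_nonsing_inv C hCdet
  have hC2 : C⁻¹ * C = 1 := Matrix.nonsing_inv_mul C hCdet
  have hD2 : D⁻¹ * D = 1 := Matrix.nonsing_inv_mul D hDdet
  -- B * C⁻¹ = D⁻¹ * B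
  have hBC : B * C⁻¹ = D⁻¹ * B := by
    have h1 : B * C = D * B := by rw [hCdef, hDdef]; noncomm_ring
    calc B * C⁻¹ = D⁻¹ * (D * B) * C⁻¹ := by rw [← Matrix.mul_assoc, hD2, Matrix.one_mul]
    _ = D⁻¹ * (B * C) * C⁻¹ := by rw [h1]
    _ = D⁻¹ * B * (C * C⁻¹) := by simp only [Matrix.mul_assoc]
    _ = D⁻¹ * B := by rw [hC1, Matrix.mul_one]
  constructor
  · -- first identity
    have h2 : X * A - A * Y = Matrix.vecMulVec α a := by
      have : X * A - A * Y = Matrix.diagonal l * A - A * Matrix.diagonal r := by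
        rw [hXdef, hYdef]
        simp only [Matrix.sub_mul, Matrix.mul_sub, Matrix.smul_mul, Matrix.mul_smul,
          Matrix.one_mul, Matrix.mul_one]
        abel
      rw [this, hA]
    have hAY : A * Y = X * A - Matrix.vecMulVec α a := by
      rw [← h2]; abel
    set w : Fin n → ℂ := Matrix.vecMul a (B * X⁻¹) with hwdef
    have key : 1 + A * Y * (B * X⁻¹)
        = X * C * X⁻¹ - Matrix.vecMulVec α w := by
      rw [hAY, Matrix.sub_mul, vecMulVec_mul']
      rw [hCdef, Matrix.mul_add, Matrix.add_mul, Matrix.mul_one, hX1]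
      rw [hwdef]
      have : X * A * (B * X⁻¹) = X * (A * B) * X⁻¹ := by
        simp only [Matrix.mul_assoc]
      rw [this]
      abel
    set M : Matrix (Fin n) (Fin n) ℂ := X * C * X⁻¹ with hMdef
    set Minv : Matrix (Fin n) (Fin n) ℂ := X * C⁻¹ * X⁻¹ with hMinvdef
    have hM1 : M * Minv = 1 := by
      rw [hMdef, hMinvdef]
      calc X * C * X⁻¹ * (X * C⁻¹ * X⁻¹)
          = X * C * (X⁻¹ * X) * C⁻¹ * X⁻¹ := by simp only [Matrix.mul_assoc]
        _ = X * (C * C⁻¹) * X⁻¹ := by rw [hX2]; simp only [Matrix.mul_one, Matrix.mul_assoc]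
        _ = 1 := by rw [hC1, Matrix.mul_one, hX1]
    have hfact : M - Matrix.vecMulVec α w
        = M * (1 + Matrix.vecMulVec (-(Minv *ᵥ α)) w) := by
      rw [Matrix.mul_add, Matrix.mul_one, mul_vecMulVec']
      have : M *ᵥ -(Minv *ᵥ α) = -α := by
        rw [Matrix.mulVec_neg, Matrix.mulVec_mulVec, hM1, Matrix.one_mulVec]
      rw [this]
      have : Matrix.vecMulVec (-α) w = -Matrix.vecMulVec α w := by
        ext i j; simp [Matrix.vecMulVec_apply]
      rw [this]
      abel
    have hMdet : M.det = C.det := by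
      rw [hMdef, Matrix.det_mul, Matrix.det_mul, Matrix.det_nonsing_inv]
      have hx := hXdet.ne_zero
      rw [Ring.inverse_eq_inv']
      field_simp
    have hBXM : B * X⁻¹ * (X * C⁻¹ * X⁻¹) = D⁻¹ * (B * X⁻¹) := by
      calc B * X⁻¹ * (X * C⁻¹ * X⁻¹)
          = B * (X⁻¹ * X) * C⁻¹ * X⁻¹ := by simp only [Matrix.mul_assoc]
        _ = B * C⁻¹ * X⁻¹ := by rw [hX2]; simp only [Matrix.mul_one, Matrix.mul_assoc]
        _ = D⁻¹ * B * X⁻¹ := by rw [hBC]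
        _ = D⁻¹ * (B * X⁻¹) := by simp only [Matrix.mul_assoc]
    have hw : w ⬝ᵥ (Minv *ᵥ α) = Matrix.vecMul a (D⁻¹ * (B * X⁻¹)) ⬝ᵥ α := by
      rw [hwdef, Matrix.dotProduct_mulVec, Matrix.vecMul_vecMul, hMinvdef, hBXM]
    rw [key, hfact, Matrix.det_mul, hMdet, det_one_add_vecMulVec']
    rw [show w ⬝ᵥ -(Minv *ᵥ α) = -(w ⬝ᵥ (Minv *ᵥ α)) from by simp, hw]
    ring
  · -- second identity
    have h1 : Y * B = B * X + Matrix.vecMulVec β b := by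
      have : Y * B - B * X = Matrix.diagonal r * B - B * Matrix.diagonal l := by
        rw [hXdef, hYdef]
        simp only [Matrix.sub_mul, Matrix.mul_sub, Matrix.smul_mul, Matrix.mul_smul,
          Matrix.one_mul, Matrix.mul_one]
        abel
      rw [hB] at this
      rw [← this]; abel
    have key : 1 + A * Y * (B * X⁻¹)
        = C + Matrix.vecMulVec (A *ᵥ β) (Matrix.vecMul b X⁻¹) := by
      have : A * Y * (B * X⁻¹) = A * (Y * B) * X⁻¹ := by
        simp only [Matrix.mul_assoc]
      rw [this, h1, Matrix.mul_add, Matrix.add_mul, mul_vecMulVec', vecMulVec_mul']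
      have h2 : A * (B * X) * X⁻¹ = A * B := by
        calc A * (B * X) * X⁻¹ = A * B * (X * X⁻¹) := by simp only [Matrix.mul_assoc]
          _ = A * B := by rw [hX1, Matrix.mul_one]
      rw [h2, hCdef]
      abel
    have hfact : C + Matrix.vecMulVec (A *ᵥ β) (Matrix.vecMul b X⁻¹)
        = C * (1 + Matrix.vecMulVec (C⁻¹ *ᵥ (A *ᵥ β)) (Matrix.vecMul b X⁻¹)) := by
      rw [Matrix.mul_add, Matrix.mul_one, mul_vecMulVec', Matrix.mulVec_mulVec, hC1,
        Matrix.one_mulVec]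
    rw [key, hfact, Matrix.det_mul, det_one_add_vecMulVec']
    congr 2
    simp [Matrix.dotProduct_mulVec, Matrix.vecMul_vecMul, Matrix.mul_assoc]
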